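/- For N = 2 (q₁ = 4): if q₀ satisfies q₀³ + 3p₁q₀² + (2p₁² − 8p₀ − 4)q₀ − 8p₀p₁ = 0, then there exist c₀, c₁, c₂ ∈ ℂ, not all zero, such that Φ(z) = c₀ + c₁ sz + c₂ (sz)² solves z Φ'' + (p₀ + p₁ s z − 2 s² z²) Φ' + (q₀ s + 4 s² z) Φ = 0. -/

import Mathlib

private lemma deriv_quad (c₀ c₁ c₂ s : ℂ) :
    deriv (fun w : ℂ => c₀ + c₁ * (s * w) + c₂ * (s * w) ^ 2)
      = fun z => c₁ * s + c₂ * (2 * (s * z) * s) := by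
  funext z
  have h : HasDerivAt (fun w : ℂ => c₀ + c₁ * (s * w) + c₂ * (s * w) ^ 2)
      (c₁ * s + c₂ * (2 * (s * z) * s)) z := by
    have hsw : HasDerivAt (fun w : ℂ => s * w) s z := by
      simpa using (hasDerivAt_id z).const_mul s
    have h1 : HasDerivAt (fun w : ℂ => c₀ + c₁ * (s * w)) (c₁ * s) z := by
      simpa using (hsw.const_mul c₁).const_add c₀
    have h2 : HasDerivAt (fun w : ℂ => c₂ * (s * w) ^ 2) (c₂ * (2 * (s * z) * s)) z := by
      have := (hsw.pow 2).const_mul c₂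
      simpa [mul_comm, mul_assoc, mul_left_comm] using this
    exact h1.add h2
  exact h.deriv

private lemma deriv2_quad (c₀ c₁ c₂ s : ℂ) (z : ℂ) :
    deriv (deriv (fun w : ℂ => c₀ + c₁ * (s * w) + c₂ * (s * w) ^ 2)) z
      = 2 * c₂ * s ^ 2 := by
  rw [deriv_quad]
  have h : HasDerivAt (fun z : ℂ => c₁ * s + c₂ * (2 * (s * z) * s)) (2 * c₂ * s ^ 2) z := by
    have hsw : HasDerivAt (fun w : ℂ => s * w) s z := by
      simpa using (hasDerivAt_id z).const_mul s
    have := ((hsw.const_mul 2).mul_const s).const_mul c₂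
    have h2 := this.const_add (c₁ * s)
    rw [show (2 * c₂ * s ^ 2) = c₂ * (2 * s * s) by ring]
    exact h2
  exact h.deriv

/-- for `N = 2` (`q₁ = 4`), if `q₀` satisfies the cubic eigenvalue equation,
then a nontrivial quadratic polynomial solution of the biconfluent Heun equation exists. -/
theorem bhe_degree_two_polynomial (p₀ p₁ q₀ s : ℂ) (hs : s ≠ 0)
    (hq₀ : q₀ ^ 3 + 3 * p₁ * q₀ ^ 2 + (2 * p₁ ^ 2 - 8 * p₀ - 4) * q₀ - 8 * p₀ * p₁ = 0) :
    ∃ c₀ c₁ c₂ : ℂ, ¬(c₀ = 0 ∧ c₁ = 0 ∧ c₂ = 0) ∧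
      ∀ z : ℂ,
        z * deriv (deriv (fun w => c₀ + c₁ * (s * w) + c₂ * (s * w) ^ 2)) z
          + (p₀ + p₁ * s * z - 2 * s ^ 2 * z ^ 2)
              * deriv (fun w => c₀ + c₁ * (s * w) + c₂ * (s * w) ^ 2) z
          + (q₀ * s + 4 * s ^ 2 * z) * (c₀ + c₁ * (s * z) + c₂ * (s * z) ^ 2) = 0 := by
  refine ⟨(p₁ + q₀) * (2 * p₁ + q₀) - 4 * (1 + p₀), -4 * (2 * p₁ + q₀), 8, ?_, ?_⟩
  · rintro ⟨-, -, h⟩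
    exact (by norm_num : (8 : ℂ) ≠ 0) h
  · intro z
    rw [deriv2_quad, deriv_quad]
    linear_combination s * hq₀
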